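/- Let (𝒮,d) be a Busemann surface, let x,y,z ∈ 𝒮, and let x',y',z' ∈ Δ(x,y,z), where Δ(x,y,z) denotes the convex hull of {x,y,z}. Then π(x',y',z') ≤ π(x,y,z), where π(a,b,c) = d(a,b)+d(b,c)+d(c,a) is the perimeter. Moreover, equality holds only if {x',y',z'} = {x,y,z} or the points x,y,z are collinear (one of them lies on the geodesic segment between the other two). -/

import Mathlib

open Metric Set

section Defs

variable {X : Type*} [MetricSpace X]

/-- `γ` is a geodesic parametrized by arclength on the interval `[0, l]`. -/
def IsGeodesicMap (γ : ℝ → X) (l : ℝ) : Prop :=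
  ∀ s ∈ Set.Icc (0 : ℝ) l, ∀ t ∈ Set.Icc (0 : ℝ) l, dist (γ s) (γ t) = |s - t|

/-- A geodesic metric space: every pair of points is joined by a geodesic. -/
def IsGeodesicSpace (X : Type*) [MetricSpace X] : Prop :=
  ∀ x y : X, ∃ γ : ℝ → X, IsGeodesicMap γ (dist x y) ∧ γ 0 = x ∧ γ (dist x y) = y

/-- A Busemann space: a geodesic metric space in which the distance between
any two (affinely reparametrized) geodesics is convex. -/
def IsBusemannSpace (X : Type*) [MetricSpace X] : Prop :=
  IsGeodesicSpace X ∧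
    ∀ (γ γ' : ℝ → X) (l l' : ℝ), 0 ≤ l → 0 ≤ l' →
      IsGeodesicMap γ l → IsGeodesicMap γ' l' →
        ∀ t ∈ Set.Icc (0 : ℝ) 1,
          dist (γ (t * l)) (γ' (t * l')) ≤
            (1 - t) * dist (γ 0) (γ' 0) + t * dist (γ l) (γ' l')

/-- A Busemann surface: a Busemann space homeomorphic to the Euclidean plane. -/
def IsBusemannSurface (X : Type*) [MetricSpace X] : Prop :=
  IsBusemannSpace X ∧ Nonempty (X ≃ₜ EuclideanSpace ℝ (Fin 2))

/-- The covering number `ρ_δ(S)`: the least number of closed balls of radius `δ`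
(centered at arbitrary points of `X`) needed to cover `S`. -/
noncomputable def covNum (δ : ℝ) (S : Set X) : ℕ∞ :=
  sInf {n : ℕ∞ | ∃ T : Set X, T.encard = n ∧ S ⊆ ⋃ x ∈ T, Metric.closedBall x δ}

/-- The packing number `ν_δ(S)`: the largest cardinality of a subset `P ⊆ S`
whose points are pairwise at distance `> 2δ`. -/
noncomputable def packNum (δ : ℝ) (S : Set X) : ℕ∞ :=
  sSup {n : ℕ∞ | ∃ P : Set X, P ⊆ S ∧ P.encard = n ∧
    P.Pairwise fun p q => 2 * δ < dist p q}

/-- The geodesic segment `[x,y]` in a (uniquely geodesic) metric space. -/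
def seg (x y : X) : Set X := {z | dist x z + dist z y = dist x y}

/-- A set is (geodesically) convex if it contains the segment between any two of its points. -/
def GConvex (C : Set X) : Prop := ∀ x ∈ C, ∀ y ∈ C, seg x y ⊆ C

/-- The (geodesic) convex hull of a set. -/
def gHull (Q : Set X) : Set X := ⋂₀ {C : Set X | GConvex C ∧ Q ⊆ C}

/-- The triangle `Δ(x,y,z)`: the convex hull of `{x,y,z}`. -/
def triangleG (x y z : X) : Set X := gHull {x, y, z}

/-- The perimeter `π(a,b,c)` of a triangle. -/
def perim (a b c : X) : ℝ := dist a b + dist b c + dist c a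

/-- Three points are collinear if one lies on the geodesic segment between the other two. -/
def CollinearPts (a b c : X) : Prop := b ∈ seg a c ∨ a ∈ seg b c ∨ c ∈ seg a b

/-- A geodesic line: the image of an isometric embedding of `ℝ`. -/
def IsGeodesicLine (L : Set X) : Prop := ∃ γ : ℝ → X, Isometry γ ∧ L = Set.range γ

/-- A closed halfplane determined by the line `L`: the union of `L` with a
connected component of its complement. -/
def IsHalfplane (L H : Set X) : Prop :=
  ∃ p, p ∉ L ∧ H = connectedComponentIn Lᶜ p ∪ L

/-- The line `L` separates `A` from `B`: they lie in different closed halfplanes of `L`. -/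
def LineSep (L A B : Set X) : Prop :=
  ∃ H₁ H₂ : Set X, IsHalfplane L H₁ ∧ IsHalfplane L H₂ ∧ H₁ ≠ H₂ ∧ A ⊆ H₁ ∧ B ⊆ H₂

/-- The shade `Sh_u(x,y)` of the segment `[x,y]` with respect to `u`. -/
def Shade (u x y : X) : Set X :=
  {p | (seg u p ∩ seg x y).Nonempty ∧
    ∃ L : Set X, IsGeodesicLine L ∧ u ∈ L ∧ p ∈ L ∧ LineSep L {x} {y}}

/-- The shade `St_u(x,y,z)` of the triangle `Δ(x,y,z)` with respect to `u`. -/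
def TriShade (u x y z : X) : Set X := Shade u x y ∪ Shade u y z ∪ Shade u z x

end Defs

section Aux

variable {X : Type*} [MetricSpace X]

lemma isGeodesicMap_const (c : X) : IsGeodesicMap (fun _ => c) 0 := by
  intro s hs t ht
  have hs0 : s = 0 := le_antisymm hs.2 hs.1
  have ht0 : t = 0 := le_antisymm ht.2 ht.1
  subst hs0; subst ht0; simp

lemma isGeodesicMap_restrict {γ : ℝ → X} {l : ℝ} (h : IsGeodesicMap γ l)
    {s1 s2 : ℝ} (h0 : 0 ≤ s1) (h2 : s2 ≤ l) :
    IsGeodesicMap (fun v => γ (s1 + v)) (s2 - s1) := by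
  intro s hs t ht
  have h1 : s1 + s ∈ Set.Icc 0 l := ⟨by linarith [hs.1], by linarith [hs.2]⟩
  have h1' : s1 + t ∈ Set.Icc 0 l := ⟨by linarith [ht.1], by linarith [ht.2]⟩
  have hd := h _ h1 _ h1'
  simp only []
  rw [hd]
  congr 1; ring

lemma isGeodesicMap_rev {γ : ℝ → X} {l : ℝ} (hl : 0 ≤ l) (h : IsGeodesicMap γ l) :
    IsGeodesicMap (fun s => γ (l - s)) l := by
  intro s hs t ht
  have h1 : l - s ∈ Set.Icc 0 l := ⟨by linarith [hs.2], by linarith [hs.1]⟩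
  have h1' : l - t ∈ Set.Icc 0 l := ⟨by linarith [ht.2], by linarith [ht.1]⟩
  have hd := h _ h1 _ h1'
  simp only []
  rw [hd, show l - s - (l - t) = t - s by ring, abs_sub_comm]

lemma bus_convex (hB : IsBusemannSpace X) {γ : ℝ → X} {l : ℝ}
    (hγ : IsGeodesicMap γ l) (c : X) {s1 s2 t : ℝ}
    (hs1 : s1 ∈ Set.Icc 0 l) (hs2 : s2 ∈ Set.Icc 0 l) (h12 : s1 ≤ s2)
    (ht : t ∈ Set.Icc (0:ℝ) 1) :
    dist (γ ((1 - t) * s1 + t * s2)) c ≤ (1 - t) * dist (γ s1) c + t * dist (γ s2) c := by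
  have hres := isGeodesicMap_restrict hγ hs1.1 hs2.2
  have hkey := hB.2 _ _ (s2 - s1) 0 (by linarith) le_rfl hres (isGeodesicMap_const c) t ht
  rw [show s1 + t * (s2 - s1) = (1 - t) * s1 + t * s2 by ring, add_zero,
    show s1 + (s2 - s1) = s2 by ring] at hkey
  exact hkey

lemma bus_unique (hB : IsBusemannSpace X) {γ γ' : ℝ → X} {l : ℝ} (hl : 0 ≤ l)
    (hγ : IsGeodesicMap γ l) (hγ' : IsGeodesicMap γ' l)
    (h0 : γ 0 = γ' 0) (h1 : γ l = γ' l) :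
    ∀ u ∈ Set.Icc 0 l, γ u = γ' u := by
  intro u hu
  rcases eq_or_lt_of_le hl with h | h
  · have hu0 : u = 0 := le_antisymm (h ▸ hu.2) hu.1
    · subst hu0; exact h0
  · have hne : l ≠ 0 := ne_of_gt h
    have ht : u / l ∈ Set.Icc (0:ℝ) 1 := ⟨div_nonneg hu.1 h.le, (div_le_one h).mpr hu.2⟩
    have hkey := hB.2 γ γ' l l hl hl hγ hγ' (u / l) ht
    rw [div_mul_cancel₀ u hne] at hkey
    rw [h0, h1] at hkey
    simp only [dist_self, mul_zero, add_zero, zero_add] at hkey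
    exact dist_le_zero.mp (by linarith)

end Aux

section Aux2

variable {X : Type*} [MetricSpace X]

lemma geo_param (hB : IsBusemannSpace X) {x y w : X} (hw : w ∈ seg x y)
    {γ : ℝ → X} (hγ : IsGeodesicMap γ (dist x y)) (h0 : γ 0 = x) (h1 : γ (dist x y) = y) :
    γ (dist x w) = w := by
  obtain ⟨δ1, hδ1, hδ10, hδ11⟩ := hB.1 x w
  obtain ⟨δ2, hδ2, hδ20, hδ21⟩ := hB.1 w y
  have hab : dist x w + dist w y = dist x y := hw
  have ha0 : (0:ℝ) ≤ dist x w := dist_nonneg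
  have hb0 : (0:ℝ) ≤ dist w y := dist_nonneg
  set a := dist x w with hadef
  set b := dist w y with hbdef
  set η : ℝ → X := (fun s => if s ≤ a then δ1 s else δ2 (s - a)) with hηdef
  have hkey : ∀ s t : ℝ, s ∈ Set.Icc 0 (dist x y) → t ∈ Set.Icc 0 (dist x y) → s ≤ t →
      dist (η s) (η t) = |s - t| := by
    intro s t hs ht hst
    have habs : |s - t| = t - s := by rw [abs_sub_comm, abs_of_nonneg (by linarith)]
    by_cases h1s : s ≤ a <;> by_cases h1t : t ≤ a
    · simp only [hηdef]
      rw [if_pos h1s, if_pos h1t]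
      exact hδ1 s ⟨hs.1, h1s⟩ t ⟨ht.1, h1t⟩
    · push_neg at h1t
      have hd1 : dist (δ1 s) w = a - s := by
        rw [← hδ11, hδ1 s ⟨hs.1, h1s⟩ a ⟨ha0, le_rfl⟩, abs_of_nonpos (by linarith)]
        ring
      have hd2 : dist w (δ2 (t - a)) = t - a := by
        rw [← hδ20, hδ2 0 ⟨le_rfl, hb0⟩ (t - a) ⟨by linarith, by linarith [ht.2]⟩,
          abs_of_nonpos (by linarith)]
        ring
      have hxs : dist x (δ1 s) = s := by
        rw [← hδ10, hδ1 0 ⟨le_rfl, ha0⟩ s ⟨hs.1, h1s⟩, zero_sub, abs_neg, abs_of_nonneg hs.1]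
      have hty : dist (δ2 (t - a)) y = (a + b) - t := by
        rw [← hδ21, hδ2 (t - a) ⟨by linarith, by linarith [ht.2]⟩ b ⟨hb0, le_rfl⟩,
          abs_of_nonpos (by linarith [ht.2])]
        ring
      simp only [hηdef]
      rw [if_pos h1s, if_neg (not_le.mpr h1t)]
      have hup : dist (δ1 s) (δ2 (t - a)) ≤ t - s := by
        have := dist_triangle (δ1 s) w (δ2 (t - a))
        linarith [hd1, hd2]
      have hlow : t - s ≤ dist (δ1 s) (δ2 (t - a)) := by
        have h4 := dist_triangle4 x (δ1 s) (δ2 (t - a)) y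
        linarith [hxs, hty, hab]
      rw [habs]; linarith
    · push_neg at h1s; linarith
    · push_neg at h1s h1t
      simp only [hηdef]
      rw [if_neg (not_le.mpr h1s), if_neg (not_le.mpr h1t)]
      rw [hδ2 (s - a) ⟨by linarith, by linarith [hs.2]⟩ (t - a) ⟨by linarith, by linarith [ht.2]⟩]
      congr 1; ring
  have hηgeo : IsGeodesicMap η (dist x y) := by
    intro s hs t ht
    rcases le_total s t with h | h
    · exact hkey s t hs ht h
    · rw [dist_comm, hkey t s ht hs h, abs_sub_comm]
  have hη0 : η 0 = x := by
    simp only [hηdef]; rw [if_pos ha0]; exact hδ10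
  have hηL : η (dist x y) = y := by
    simp only [hηdef]
    by_cases hc : dist x y ≤ a
    · rw [if_pos hc]
      have hb0' : b = 0 := by linarith
      have hwy : w = y := by
        have : dist w y = 0 := by rw [← hbdef]; exact hb0'
        exact dist_eq_zero.mp this
      rw [show dist x y = a by linarith, hδ11, hwy]
    · rw [if_neg hc, show dist x y - a = b by linarith, hδ21]
  have huniq := bus_unique hB dist_nonneg hγ hηgeo (by rw [h0, hη0]) (by rw [h1, hηL])
      a ⟨ha0, by linarith⟩
  rw [huniq]
  simp only [hηdef]
  rw [if_pos le_rfl]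
  exact hδ11

lemma seg_unique (hB : IsBusemannSpace X) {x y w w' : X} (hw : w ∈ seg x y)
    (hw' : w' ∈ seg x y) (hd : dist x w = dist x w') : w = w' := by
  obtain ⟨γ, hγ, h0, h1⟩ := hB.1 x y
  have e1 := geo_param hB hw hγ h0 h1
  have e2 := geo_param hB hw' hγ h0 h1
  rw [← e1, hd, e2]

lemma subset_gHull (Q : Set X) : Q ⊆ gHull Q := by
  intro q hq
  exact fun C hC => hC.2 hq

lemma gHull_min {Q C : Set X} (hC : GConvex C) (hQC : Q ⊆ C) : gHull Q ⊆ C :=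
  Set.sInter_subset_of_mem ⟨hC, hQC⟩

lemma gconvex_sublevel (hB : IsBusemannSpace X) (c1 c2 : X) (M : ℝ) :
    GConvex {w : X | dist w c1 + dist w c2 ≤ M} := by
  intro u hu v hv w hw
  simp only [Set.mem_setOf_eq] at hu hv ⊢
  obtain ⟨γ, hγ, h0, h1⟩ := hB.1 u v
  have hwseg : dist u w + dist w v = dist u v := hw
  have hwp : γ (dist u w) = w := geo_param hB hw hγ h0 h1
  by_cases hl : dist u v = 0
  · have h2 : dist u w = 0 := by
      linarith [dist_nonneg (x := w) (y := v), dist_nonneg (x := u) (y := w)]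
    have hwu : w = u := (dist_eq_zero.mp h2).symm
    rw [hwu]; exact hu
  · have hlpos : 0 < dist u v := lt_of_le_of_ne dist_nonneg (Ne.symm hl)
    have ht0 : (0:ℝ) ≤ dist u w := dist_nonneg
    have htl : dist u w ≤ dist u v := by linarith [dist_nonneg (x := w) (y := v)]
    have htt : dist u w / dist u v ∈ Set.Icc (0:ℝ) 1 :=
      ⟨div_nonneg ht0 hlpos.le, (div_le_one hlpos).mpr htl⟩
    have hcx1 := bus_convex hB hγ c1 (⟨le_rfl, hlpos.le⟩ : (0:ℝ) ∈ Set.Icc 0 (dist u v))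
      (⟨hlpos.le, le_rfl⟩ : dist u v ∈ Set.Icc 0 (dist u v)) hlpos.le htt
    have hcx2 := bus_convex hB hγ c2 (⟨le_rfl, hlpos.le⟩ : (0:ℝ) ∈ Set.Icc 0 (dist u v))
      (⟨hlpos.le, le_rfl⟩ : dist u v ∈ Set.Icc 0 (dist u v)) hlpos.le htt
    rw [show (1 - dist u w / dist u v) * 0 + dist u w / dist u v * dist u v = dist u w by
      (field_simp; ring), hwp, h0, h1] at hcx1 hcx2
    have hc1 : (0:ℝ) ≤ 1 - dist u w / dist u v := by linarith [htt.2]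
    have k1 := mul_le_mul_of_nonneg_left hu hc1
    have k2 := mul_le_mul_of_nonneg_left hv htt.1
    nlinarith [hcx1, hcx2, k1, k2]

lemma argmax3_dist (hB : IsBusemannSpace X) (x y z c1 c2 : X) {p : X}
    (hp : p ∈ gHull {x, y, z}) :
    ∃ a, (a = x ∨ a = y ∨ a = z) ∧ dist p c1 + dist p c2 ≤ dist a c1 + dist a c2 ∧
      (∀ v, (v = x ∨ v = y ∨ v = z) → dist v c1 + dist v c2 ≤ dist a c1 + dist a c2) := by
  obtain ⟨a, haor, hmax⟩ : ∃ a, (a = x ∨ a = y ∨ a = z) ∧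
      ∀ v, (v = x ∨ v = y ∨ v = z) → dist v c1 + dist v c2 ≤ dist a c1 + dist a c2 := by
    rcases le_total (dist x c1 + dist x c2) (dist y c1 + dist y c2) with h1 | h1 <;>
      rcases le_total (dist y c1 + dist y c2) (dist z c1 + dist z c2) with h2 | h2 <;>
      rcases le_total (dist x c1 + dist x c2) (dist z c1 + dist z c2) with h3 | h3 <;>
      first
        | (refine ⟨x, Or.inl rfl, ?_⟩; rintro v (rfl | rfl | rfl) <;> linarith)
        | (refine ⟨y, Or.inr (Or.inl rfl), ?_⟩; rintro v (rfl | rfl | rfl) <;> linarith)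
        | (refine ⟨z, Or.inr (Or.inr rfl), ?_⟩; rintro v (rfl | rfl | rfl) <;> linarith)
  refine ⟨a, haor, ?_, hmax⟩
  have hsub : gHull {x, y, z} ⊆ {w : X | dist w c1 + dist w c2 ≤ dist a c1 + dist a c2} := by
    refine gHull_min (gconvex_sublevel hB c1 c2 _) ?_
    intro q hq
    simp only [Set.mem_insert_iff, Set.mem_singleton_iff] at hq
    exact hmax q hq
  exact hsub hp

lemma collinear_of_mem_seg (hB : IsBusemannSpace X) {u v x y z : X}
    (hx : x ∈ seg u v) (hy : y ∈ seg u v) (hz : z ∈ seg u v) : CollinearPts x y z := by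
  obtain ⟨γ, hγ, h0, h1⟩ := hB.1 u v
  have hxp := geo_param hB hx hγ h0 h1
  have hyp := geo_param hB hy hγ h0 h1
  have hzp := geo_param hB hz hγ h0 h1
  have hxe : dist u x + dist x v = dist u v := hx
  have hye : dist u y + dist y v = dist u v := hy
  have hze : dist u z + dist z v = dist u v := hz
  have hxm : dist u x ∈ Set.Icc 0 (dist u v) :=
    ⟨dist_nonneg, by linarith [dist_nonneg (x := x) (y := v)]⟩
  have hym : dist u y ∈ Set.Icc 0 (dist u v) :=
    ⟨dist_nonneg, by linarith [dist_nonneg (x := y) (y := v)]⟩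
  have hzm : dist u z ∈ Set.Icc 0 (dist u v) :=
    ⟨dist_nonneg, by linarith [dist_nonneg (x := z) (y := v)]⟩
  set s1 := dist u x with hs1
  set s2 := dist u y with hs2
  set s3 := dist u z with hs3
  have exy : dist x y = |s1 - s2| := by rw [← hxp, ← hyp]; exact hγ s1 hxm s2 hym
  have eyx : dist y x = |s1 - s2| := by rw [dist_comm]; exact exy
  have eyz : dist y z = |s2 - s3| := by rw [← hyp, ← hzp]; exact hγ s2 hym s3 hzm
  have ezy : dist z y = |s2 - s3| := by rw [dist_comm]; exact eyz
  have exz : dist x z = |s1 - s3| := by rw [← hxp, ← hzp]; exact hγ s1 hxm s3 hzm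
  have ezx : dist z x = |s1 - s3| := by rw [dist_comm]; exact exz
  have habs : ∀ a b : ℝ, a ≤ b → |a - b| = b - a := by
    intro a b h; rw [abs_sub_comm, abs_of_nonneg (by linarith)]
  have habs' : ∀ a b : ℝ, b ≤ a → |a - b| = a - b := by
    intro a b h; exact abs_of_nonneg (by linarith)
  simp only [CollinearPts, seg, Set.mem_setOf_eq, exy, eyx, eyz, ezy, exz, ezx]
  rcases le_total s1 s2 with h | h <;> rcases le_total s2 s3 with h' | h' <;>
    rcases le_total s1 s3 with h'' | h'' <;>
    first
      | (left; rw [habs _ _ h, habs _ _ h', habs _ _ h'']; linarith)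
      | (left; rw [habs _ _ h, habs _ _ h', habs' _ _ h'']; linarith)
      | (left; rw [habs _ _ h, habs' _ _ h', habs _ _ h'']; linarith)
      | (left; rw [habs _ _ h, habs' _ _ h', habs' _ _ h'']; linarith)
      | (left; rw [habs' _ _ h, habs _ _ h', habs _ _ h'']; linarith)
      | (left; rw [habs' _ _ h, habs _ _ h', habs' _ _ h'']; linarith)
      | (left; rw [habs' _ _ h, habs' _ _ h', habs _ _ h'']; linarith)
      | (left; rw [habs' _ _ h, habs' _ _ h', habs' _ _ h'']; linarith)
      | (right; left; rw [habs _ _ h, habs _ _ h', habs _ _ h'']; linarith)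
      | (right; left; rw [habs _ _ h, habs _ _ h', habs' _ _ h'']; linarith)
      | (right; left; rw [habs _ _ h, habs' _ _ h', habs _ _ h'']; linarith)
      | (right; left; rw [habs _ _ h, habs' _ _ h', habs' _ _ h'']; linarith)
      | (right; left; rw [habs' _ _ h, habs _ _ h', habs _ _ h'']; linarith)
      | (right; left; rw [habs' _ _ h, habs _ _ h', habs' _ _ h'']; linarith)
      | (right; left; rw [habs' _ _ h, habs' _ _ h', habs _ _ h'']; linarith)
      | (right; left; rw [habs' _ _ h, habs' _ _ h', habs' _ _ h'']; linarith)
      | (right; right; rw [habs _ _ h, habs _ _ h', habs _ _ h'']; linarith)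
      | (right; right; rw [habs _ _ h, habs _ _ h', habs' _ _ h'']; linarith)
      | (right; right; rw [habs _ _ h, habs' _ _ h', habs _ _ h'']; linarith)
      | (right; right; rw [habs _ _ h, habs' _ _ h', habs' _ _ h'']; linarith)
      | (right; right; rw [habs' _ _ h, habs _ _ h', habs _ _ h'']; linarith)
      | (right; right; rw [habs' _ _ h, habs _ _ h', habs' _ _ h'']; linarith)
      | (right; right; rw [habs' _ _ h, habs' _ _ h', habs _ _ h'']; linarith)
      | (right; right; rw [habs' _ _ h, habs' _ _ h', habs' _ _ h'']; linarith)

end Aux2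

section Aux3

variable {X : Type*} [MetricSpace X]

set_option maxHeartbeats 1000000 in
lemma lemR_step (hB : IsBusemannSpace X) {σ : ℝ → X} {L : ℝ} (hL : 0 < L)
    (hσ : IsGeodesicMap σ L) {p : X} {a β : ℝ} (ha : 0 < a) (hβ : 0 ≤ β)
    (haff : ∀ s ∈ Set.Icc (0:ℝ) L, dist p (σ s) = a + β * s) :
    ∃ w, ∀ s ∈ Set.Icc (0:ℝ) L, dist w (σ s) = a^2 / (2*a + β*L) + β * s := by
  set b := a + β * L with hb
  clear_value b
  have hβL : 0 ≤ β * L := mul_nonneg hβ hL.le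
  have hbpos : 0 < b := by rw [hb]; linarith
  have hab : 0 < a + b := by linarith
  set t0 := a / (a + b) with ht0
  clear_value t0
  have ht0ab : t0 * (a + b) = a := by rw [ht0]; field_simp
  have ht0mem : t0 ∈ Set.Icc (0:ℝ) 1 :=
    ⟨by rw [ht0]; exact div_nonneg ha.le hab.le,
     by rw [ht0]; exact (div_le_one hab).mpr (by linarith)⟩
  have ht0pos : 0 < t0 := by rw [ht0]; exact div_pos ha hab
  have ht0lt1 : t0 < 1 := by rw [ht0, div_lt_one hab]; linarith
  have hd0 : dist p (σ 0) = a := by simpa using haff 0 ⟨le_rfl, hL.le⟩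
  have hda : dist (σ 0) p = a := by rw [dist_comm]; exact hd0
  have hdL : dist p (σ L) = b := by rw [haff L ⟨hL.le, le_rfl⟩, hb]
  obtain ⟨δ, hδ, hδ0, hδ1⟩ := hB.1 (σ 0) p
  obtain ⟨γ, hγ, hγ0, hγ1⟩ := hB.1 p (σ L)
  rw [hda] at hδ hδ1
  rw [hdL] at hγ hγ1
  have ht0L : t0 * L ∈ Set.Icc 0 L :=
    ⟨mul_nonneg ht0mem.1 hL.le, mul_le_of_le_one_left hL.le ht0mem.2⟩
  have hpmid : dist p (σ (t0 * L)) = a + β * (t0 * L) := haff _ ht0L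
  have hcomb : a + β * (t0 * L) = (1 - t0) * a + t0 * b := by
    rw [hb]; ring
  -- (i) Busemann from σ 0
  have hi := hB.2 σ δ L a hL.le ha.le hσ hδ t0 ht0mem
  rw [hδ0, hδ1] at hi
  simp only [dist_self, mul_zero, zero_add] at hi
  have hi' : dist (σ (t0 * L)) (δ (t0 * a)) ≤ t0 * b := by
    rw [dist_comm (σ L) p, hdL] at hi; linarith
  have hδdist : dist p (δ (t0 * a)) = (1 - t0) * a := by
    rw [← hδ1, hδ a ⟨ha.le, le_rfl⟩ (t0 * a)
      ⟨mul_nonneg ht0mem.1 ha.le, mul_le_of_le_one_left ha.le ht0mem.2⟩,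
      abs_of_nonneg (by nlinarith [ht0mem.2])]
    ring
  have key1 : dist (δ (t0 * a)) (σ (t0 * L)) = t0 * b := by
    have htri := dist_triangle p (δ (t0 * a)) (σ (t0 * L))
    have hle : dist (δ (t0 * a)) (σ (t0 * L)) ≤ t0 * b := by
      rw [dist_comm]; exact hi'
    linarith [hpmid, hδdist, hcomb]
  -- (iii) Busemann from σ L, reversed
  have hσr := isGeodesicMap_rev hL.le hσ
  have hγr := isGeodesicMap_rev hbpos.le hγ
  have hii := hB.2 _ _ L b hL.le hbpos.le hσr hγr (1 - t0)
    ⟨by linarith [ht0mem.2], by linarith [ht0mem.1]⟩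
  rw [show L - (1 - t0) * L = t0 * L by ring, show b - (1 - t0) * b = t0 * b by ring,
    sub_zero, sub_zero, sub_self, sub_self, hγ0, hγ1, hda] at hii
  simp only [dist_self, mul_zero, zero_add] at hii
  have hw2pd : dist p (γ (t0 * b)) = t0 * b := by
    rw [← hγ0, hγ 0 ⟨le_rfl, hbpos.le⟩ (t0 * b)
      ⟨mul_nonneg ht0mem.1 hbpos.le, mul_le_of_le_one_left hbpos.le ht0mem.2⟩,
      zero_sub, abs_neg, abs_of_nonneg (mul_nonneg ht0mem.1 hbpos.le)]
  have key2 : dist (γ (t0 * b)) (σ (t0 * L)) = (1 - t0) * a := by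
    have htri := dist_triangle p (γ (t0 * b)) (σ (t0 * L))
    have hle : dist (γ (t0 * b)) (σ (t0 * L)) ≤ (1 - t0) * a := by
      rw [dist_comm]; exact hii
    linarith [hpmid, hw2pd, hcomb]
  -- the two midpoints coincide
  have hw1seg : δ (t0 * a) ∈ seg p (σ (t0 * L)) := by
    show dist p (δ (t0 * a)) + dist (δ (t0 * a)) (σ (t0 * L)) = dist p (σ (t0 * L))
    rw [hδdist, key1, hpmid]; linarith [hcomb]
  have hw2seg : γ (t0 * b) ∈ seg p (σ (t0 * L)) := by
    show dist p (γ (t0 * b)) + dist (γ (t0 * b)) (σ (t0 * L)) = dist p (σ (t0 * L))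
    rw [hw2pd, key2, hpmid]; linarith [hcomb]
  have hdeq : dist p (δ (t0 * a)) = dist p (γ (t0 * b)) := by
    rw [hδdist, hw2pd]; linear_combination (-1 : ℝ) * ht0ab
  have hw12 : δ (t0 * a) = γ (t0 * b) := seg_unique hB hw1seg hw2seg hdeq
  set w := δ (t0 * a) with hwdef
  clear_value w
  have hv0 : dist w (σ 0) = t0 * a := by
    rw [hwdef, ← hδ0, hδ (t0 * a)
      ⟨mul_nonneg ht0mem.1 ha.le, mul_le_of_le_one_left ha.le ht0mem.2⟩ 0 ⟨le_rfl, ha.le⟩,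
      sub_zero, abs_of_nonneg (mul_nonneg ht0mem.1 ha.le)]
  have hvL : dist w (σ L) = (1 - t0) * b := by
    rw [hw12, ← hγ1, hγ (t0 * b)
      ⟨mul_nonneg ht0mem.1 hbpos.le, mul_le_of_le_one_left hbpos.le ht0mem.2⟩ b ⟨hbpos.le, le_rfl⟩,
      abs_of_nonpos (by nlinarith [ht0mem.2])]
    ring
  have hvm : dist w (σ (t0 * L)) = t0 * b := key1
  -- chord identities
  have hβLb : β * L = b - a := by rw [hb]; ring
  have hchordL : t0 * a + β * L = (1 - t0) * b := by linear_combination hβLb + ht0ab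
  have hchordm : t0 * a + β * (t0 * L) = t0 * b := by linear_combination t0 * hβLb
  have hfinal : ∀ s ∈ Set.Icc (0:ℝ) L, dist w (σ s) = t0 * a + β * s := by
    intro s hs
    have hsL1 : s / L ∈ Set.Icc (0:ℝ) 1 := ⟨div_nonneg hs.1 hL.le, (div_le_one hL).mpr hs.2⟩
    have hup : dist w (σ s) ≤ t0 * a + β * s := by
      have hcx := bus_convex hB hσ w (⟨le_rfl, hL.le⟩ : (0:ℝ) ∈ Set.Icc 0 L)
        (⟨hL.le, le_rfl⟩ : L ∈ Set.Icc 0 L) hL.le hsL1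
      rw [show (1 - s/L) * 0 + s/L * L = s by (field_simp; ring)] at hcx
      rw [dist_comm (σ 0) w, dist_comm (σ L) w, hv0, hvL] at hcx
      have hchords : (1 - s/L) * (t0 * a) + s/L * ((1 - t0) * b) = t0 * a + β * s := by
        rw [← hchordL]; field_simp; ring
      calc dist w (σ s) = dist (σ s) w := dist_comm _ _
        _ ≤ (1 - s/L) * (t0 * a) + s/L * ((1 - t0) * b) := hcx
        _ = t0 * a + β * s := hchords
    have hvm' : dist (σ (t0 * L)) w = t0 * b := by rw [dist_comm]; exact hvm
    have hvL' : dist (σ L) w = (1 - t0) * b := by rw [dist_comm]; exact hvL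
    have hv0' : dist (σ 0) w = t0 * a := by rw [dist_comm]; exact hv0
    rcases le_total s (t0 * L) with hcase | hcase
    · have ht0LltL : t0 * L < L := by nlinarith
      have hsL : s < L := lt_of_le_of_lt hcase ht0LltL
      set lam := (t0 * L - s) / (L - s) with hlamdef
      clear_value lam
      have hl0 : 0 ≤ lam := by rw [hlamdef]; exact div_nonneg (by linarith) (by linarith)
      have hllt : lam < 1 := by rw [hlamdef, div_lt_one (by linarith)]; linarith
      have hcombo : (1 - lam) * s + lam * L = t0 * L := by
        have hLs : L - s ≠ 0 := sub_ne_zero.mpr (Ne.symm (ne_of_lt hsL))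
        rw [hlamdef]; field_simp; ring
      have hcx := bus_convex hB hσ w (⟨hs.1, hsL.le⟩ : s ∈ Set.Icc 0 L)
        (⟨hL.le, le_rfl⟩ : L ∈ Set.Icc 0 L) hsL.le ⟨hl0, hllt.le⟩
      rw [hcombo, hvm', hvL'] at hcx
      have hchordsum : (1 - lam) * (t0 * a + β * s) + lam * ((1 - t0) * b) = t0 * b := by
        rw [← hchordL]; linear_combination β * hcombo + hchordm
      have h5 : (1 - lam) * (t0 * a + β * s) ≤ (1 - lam) * dist (σ s) w := by
        linarith [hcx, hchordsum]
      have h6 := le_of_mul_le_mul_left h5 (by linarith : (0:ℝ) < 1 - lam)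
      have hcc := dist_comm w (σ s)
      linarith [hup, h6, hcc]
    · have ht0Lpos : 0 < t0 * L := mul_pos ht0pos hL
      have hspos : 0 < s := lt_of_lt_of_le ht0Lpos hcase
      set lam := t0 * L / s with hlamdef
      clear_value lam
      have hl0 : 0 ≤ lam := by rw [hlamdef]; exact div_nonneg ht0Lpos.le hspos.le
      have hlle : lam ≤ 1 := by rw [hlamdef]; exact (div_le_one hspos).mpr hcase
      have hlpos' : 0 < lam := by rw [hlamdef]; exact div_pos ht0Lpos hspos
      have hcombo : (1 - lam) * 0 + lam * s = t0 * L := by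
        rw [hlamdef]; field_simp; ring
      have hcx := bus_convex hB hσ w (⟨le_rfl, hL.le⟩ : (0:ℝ) ∈ Set.Icc 0 L)
        hs hs.1 ⟨hl0, hlle⟩
      rw [hcombo, hvm', hv0'] at hcx
      have hchordsum : (1 - lam) * (t0 * a) + lam * (t0 * a + β * s) = t0 * b := by
        linear_combination β * hcombo + hchordm
      have h5 : lam * (t0 * a + β * s) ≤ lam * dist (σ s) w := by
        linarith [hcx, hchordsum]
      have h6 := le_of_mul_le_mul_left h5 hlpos'
      have hcc := dist_comm w (σ s)
      linarith [hup, h6, hcc]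
  have heq : a^2 / (2*a + β*L) = t0 * a := by
    have hdpos : (0:ℝ) < 2*a + β*L := by linarith
    rw [ht0, hb]
    field_simp
    ring
  refine ⟨w, fun s hs => ?_⟩
  rw [heq]
  exact hfinal s hs
  
lemma lemR (hB : IsBusemannSpace X) {σ : ℝ → X} {L : ℝ} (hL : 0 < L)
    (hσ : IsGeodesicMap σ L) {p : X} {α β : ℝ}
    (haff : ∀ s ∈ Set.Icc (0:ℝ) L, dist p (σ s) = α + β * s) :
    β = 1 ∨ β = -1 := by
  suffices key : ∀ (σ : ℝ → X), IsGeodesicMap σ L → ∀ (p : X) (α β : ℝ), 0 ≤ β →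
      (∀ s ∈ Set.Icc (0:ℝ) L, dist p (σ s) = α + β * s) → β = 1 by
    rcases le_total 0 β with hβ | hβ
    · exact Or.inl (key σ hσ p α β hβ haff)
    · right
      have h := key (fun s => σ (L - s)) (isGeodesicMap_rev hL.le hσ) p (α + β * L) (-β)
        (by linarith) ?_
      · linarith
      · intro s hs
        show dist p (σ (L - s)) = (α + β * L) + (-β) * s
        rw [haff (L - s) ⟨by linarith [hs.2], by linarith [hs.1]⟩]; ring
  intro σ hσ p α β hβ haff
  have hβ1 : β ≤ 1 := by
    have h0 := haff 0 ⟨le_rfl, hL.le⟩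
    have hLL := haff L ⟨hL.le, le_rfl⟩
    have htri := dist_triangle p (σ 0) (σ L)
    have hd := hσ 0 ⟨le_rfl, hL.le⟩ L ⟨hL.le, le_rfl⟩
    rw [abs_of_nonpos (by linarith)] at hd
    nlinarith [h0, hLL, htri, hd, hL]
  have hα0 : 0 ≤ α := by
    have h0 := haff 0 ⟨le_rfl, hL.le⟩
    have := dist_nonneg (x := p) (y := σ 0)
    linarith [h0, this]
  rcases eq_or_lt_of_le hα0 with hα | hα
  · have h0 := haff 0 ⟨le_rfl, hL.le⟩
    have hp0 : p = σ 0 := by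
      have hz : dist p (σ 0) = 0 := by rw [h0, ← hα]; ring
      exact dist_eq_zero.mp hz
    have hLL := haff L ⟨hL.le, le_rfl⟩
    rw [hp0, hσ 0 ⟨le_rfl, hL.le⟩ L ⟨hL.le, le_rfl⟩, abs_of_nonpos (by linarith)] at hLL
    have h9 : (β - 1) * L = 0 := by linarith [hLL]
    rcases mul_eq_zero.mp h9 with h | h
    · linarith
    · exact absurd h (ne_of_gt hL)
  · have key2 : ∀ n : ℕ, ∃ (α' : ℝ) (p' : X), 0 < α' ∧ α' ≤ α / 2^n ∧
        ∀ s ∈ Set.Icc (0:ℝ) L, dist p' (σ s) = α' + β * s := by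
      intro n
      induction n with
      | zero => exact ⟨α, p, hα, by norm_num, haff⟩
      | succ n ih =>
        obtain ⟨α', p', hpos, hle, hf⟩ := ih
        obtain ⟨w, hw⟩ := lemR_step hB hL hσ hpos hβ hf
        have hden : 0 < 2*α' + β*L := by nlinarith [mul_nonneg hβ hL.le]
        refine ⟨α'^2 / (2*α' + β*L), w, by positivity, ?_, hw⟩
        have h1 : α'^2 / (2*α' + β*L) ≤ α' / 2 := by
          rw [div_le_div_iff₀ hden (by norm_num : (0:ℝ) < 2)]
          nlinarith [mul_nonneg hβ hL.le, hpos]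
        have h2 : (0:ℝ) < 2^n := by positivity
        calc α'^2 / (2*α' + β*L) ≤ α' / 2 := h1
          _ ≤ (α / 2^n) / 2 := by linarith
          _ = α / 2^(n+1) := by rw [pow_succ]; ring
    have hβge : 1 ≤ β := by
      by_contra hlt
      push_neg at hlt
      have hεpos : 0 < (1 - β) * L := by nlinarith
      obtain ⟨n, hn⟩ : ∃ n : ℕ, 2 * α / ((1 - β) * L) < 2^n := by
        obtain ⟨n, hn⟩ := exists_nat_gt (2 * α / ((1 - β) * L))
        refine ⟨n, hn.trans_le ?_⟩
        exact_mod_cast (@Nat.lt_two_pow_self n).le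
      obtain ⟨α', p', hpos, hle, hf⟩ := key2 n
      have h0' := hf 0 ⟨le_rfl, hL.le⟩
      have hL' := hf L ⟨hL.le, le_rfl⟩
      have htri := dist_triangle (σ 0) p' (σ L)
      have hd := hσ 0 ⟨le_rfl, hL.le⟩ L ⟨hL.le, le_rfl⟩
      rw [abs_of_nonpos (by linarith)] at hd
      have hcomm := dist_comm (σ 0) p'
      have h2n : (0:ℝ) < 2^n := by positivity
      have hα'small : α' < (1 - β) * L / 2 := by
        have h2' := (div_lt_iff₀ hεpos).mp hn
        have h3 : α / 2^n < (1 - β) * L / 2 := by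
          rw [div_lt_div_iff₀ h2n (by norm_num : (0:ℝ) < 2)]
          nlinarith [h2']
        linarith
      linarith [htri, h0', hL', hd, hcomm, hα'small]
    exact le_antisymm hβ1 hβge

lemma lemF (hB : IsBusemannSpace X) {σ : ℝ → X} {L : ℝ} (hL : 0 < L)
    (hσ : IsGeodesicMap σ L) {c1 c2 : X} {α α' : ℝ}
    (h1 : ∀ s ∈ Set.Icc (0:ℝ) L, dist c1 (σ s) = α - s)
    (h2 : ∀ s ∈ Set.Icc (0:ℝ) L, dist c2 (σ s) = α' + s) :
    dist c1 c2 = α + α' := by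
  have h20 : dist c2 (σ 0) = α' := by simpa using h2 0 ⟨le_rfl, hL.le⟩
  have h2L : dist c2 (σ L) = α' + L := h2 L ⟨hL.le, le_rfl⟩
  have h10 : dist c1 (σ 0) = α := by simpa using h1 0 ⟨le_rfl, hL.le⟩
  have h1L : dist c1 (σ L) = α - L := h1 L ⟨hL.le, le_rfl⟩
  have hα' : 0 ≤ α' := h20 ▸ dist_nonneg
  have hpos : 0 < α' + L := by linarith
  obtain ⟨ρ, hρ, hρ0, hρ1⟩ := hB.1 c2 (σ L)
  have hseg0 : σ 0 ∈ seg c2 (σ L) := by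
    show dist c2 (σ 0) + dist (σ 0) (σ L) = dist c2 (σ L)
    rw [h20, h2L, hσ 0 ⟨le_rfl, hL.le⟩ L ⟨hL.le, le_rfl⟩, abs_of_nonpos (by linarith)]
    ring
  have hρa : ρ α' = σ 0 := by
    have hgp := geo_param hB hseg0 hρ hρ0 hρ1
    rwa [h20] at hgp
  rw [h2L] at hρ hρ1
  have ht : α' / (α' + L) ∈ Set.Icc (0:ℝ) 1 :=
    ⟨div_nonneg hα' hpos.le, (div_le_one hpos).mpr (by linarith)⟩
  have hcx := bus_convex hB hρ c1 (⟨le_rfl, by linarith⟩ : (0:ℝ) ∈ Set.Icc 0 (α' + L))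
    (⟨by linarith, le_rfl⟩ : α' + L ∈ Set.Icc 0 (α' + L)) (by linarith) ht
  rw [show (1 - α'/(α'+L)) * 0 + α'/(α'+L) * (α'+L) = α' by (field_simp; ring)] at hcx
  rw [hρa, hρ0, hρ1] at hcx
  have e1 : dist (σ 0) c1 = α := by rw [dist_comm]; exact h10
  have e2 : dist (σ L) c1 = α - L := by rw [dist_comm]; exact h1L
  rw [e1, e2] at hcx
  have hτlt : α'/(α'+L) < 1 := by rw [div_lt_one hpos]; linarith
  have hge : α + α' ≤ dist c2 c1 := by
    have h8 : (1 - α'/(α'+L)) * (α + α') = α - (α'/(α'+L)) * (α - L) := by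
      field_simp; ring
    have h7 : (1 - α'/(α'+L)) * (α + α') ≤ (1 - α'/(α'+L)) * dist c2 c1 := by
      rw [h8]; linarith [hcx]
    exact le_of_mul_le_mul_left h7 (by linarith)
  have hle : dist c1 c2 ≤ α + α' := by
    have htri := dist_triangle c1 (σ 0) c2
    have e3 : dist (σ 0) c2 = α' := by rw [dist_comm]; exact h20
    linarith [h10, e3]
  have hcc : dist c2 c1 = dist c1 c2 := dist_comm _ _
  linarith

end Aux3

section Aux4

variable {X : Type*} [MetricSpace X]

set_option maxHeartbeats 1000000 in
lemma lemE (hB : IsBusemannSpace X) (x y z c1 c2 : X) {M : ℝ} {p : X}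
    (hp : p ∈ gHull {x, y, z})
    (hMmax : ∀ v, (v = x ∨ v = y ∨ v = z) → dist v c1 + dist v c2 ≤ M)
    (hpM : dist p c1 + dist p c2 = M) :
    (p = x ∨ p = y ∨ p = z) ∨ CollinearPts x y z := by
  have hsublevel : gHull {x, y, z} ⊆ {w : X | dist w c1 + dist w c2 ≤ M} := by
    refine gHull_min (gconvex_sublevel hB c1 c2 M) ?_
    intro q hq
    simp only [Set.mem_insert_iff, Set.mem_singleton_iff] at hq
    exact hMmax q hq
  by_cases hBad : ∃ (σ : ℝ → X) (L : ℝ), 0 < L ∧ IsGeodesicMap σ L ∧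
      ∀ s ∈ Set.Icc (0:ℝ) L, dist (σ s) c1 + dist (σ s) c2 = M
  · right
    obtain ⟨σ, L, hL, hσ, hf⟩ := hBad
    have hf0 := hf 0 ⟨le_rfl, hL.le⟩
    have hfL := hf L ⟨hL.le, le_rfl⟩
    -- the two distance functions are affine along σ
    have hu : ∀ s ∈ Set.Icc (0:ℝ) L, dist (σ s) c1
        = dist (σ 0) c1 + ((dist (σ L) c1 - dist (σ 0) c1) / L) * s := by
      intro s hs
      have hfs := hf s hs
      have hτ : s / L ∈ Set.Icc (0:ℝ) 1 := ⟨div_nonneg hs.1 hL.le, (div_le_one hL).mpr hs.2⟩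
      have hc1 := bus_convex hB hσ c1 (⟨le_rfl, hL.le⟩ : (0:ℝ) ∈ Set.Icc 0 L)
        (⟨hL.le, le_rfl⟩ : L ∈ Set.Icc 0 L) hL.le hτ
      have hc2 := bus_convex hB hσ c2 (⟨le_rfl, hL.le⟩ : (0:ℝ) ∈ Set.Icc 0 L)
        (⟨hL.le, le_rfl⟩ : L ∈ Set.Icc 0 L) hL.le hτ
      rw [show (1 - s/L) * 0 + s/L * L = s by (field_simp; ring)] at hc1 hc2
      have e0 : dist (σ 0) c2 = M - dist (σ 0) c1 := by linarith
      have eL : dist (σ L) c2 = M - dist (σ L) c1 := by linarith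
      rw [e0, eL] at hc2
      have hch : (1 - s/L) * dist (σ 0) c1 + s/L * dist (σ L) c1
          = dist (σ 0) c1 + ((dist (σ L) c1 - dist (σ 0) c1) / L) * s := by
        field_simp; ring
      have hch2 : (1 - s/L) * (M - dist (σ 0) c1) + s/L * (M - dist (σ L) c1)
          = M - (dist (σ 0) c1 + ((dist (σ L) c1 - dist (σ 0) c1) / L) * s) := by
        field_simp; ring
      rw [hch] at hc1
      rw [hch2] at hc2
      linarith
    have hv : ∀ s ∈ Set.Icc (0:ℝ) L, dist (σ s) c2
        = (M - dist (σ 0) c1) - ((dist (σ L) c1 - dist (σ 0) c1) / L) * s := by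
      intro s hs
      have := hu s hs
      have := hf s hs
      linarith
    have huc : ∀ s ∈ Set.Icc (0:ℝ) L, dist c1 (σ s)
        = dist (σ 0) c1 + ((dist (σ L) c1 - dist (σ 0) c1) / L) * s := by
      intro s hs; rw [dist_comm]; exact hu s hs
    have hDM : dist c1 c2 = M := by
      rcases lemR hB hL hσ huc with hβ | hβ
      · -- c1 has slope +1, c2 slope -1
        have h1' : ∀ s ∈ Set.Icc (0:ℝ) L, dist c2 (σ s) = (M - dist (σ 0) c1) - s := by
          intro s hs; rw [dist_comm, hv s hs, hβ]; ring
        have h2' : ∀ s ∈ Set.Icc (0:ℝ) L, dist c1 (σ s) = dist (σ 0) c1 + s := by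
          intro s hs; rw [huc s hs, hβ]; ring
        have := lemF hB hL hσ h1' h2'
        rw [dist_comm]; rw [this]; ring
      · -- c1 has slope -1
        have h1' : ∀ s ∈ Set.Icc (0:ℝ) L, dist c1 (σ s) = dist (σ 0) c1 - s := by
          intro s hs; rw [huc s hs, hβ]; ring
        have h2' : ∀ s ∈ Set.Icc (0:ℝ) L, dist c2 (σ s) = (M - dist (σ 0) c1) + s := by
          intro s hs; rw [dist_comm, hv s hs, hβ]; ring
        have := lemF hB hL hσ h1' h2'
        rw [this]; ring
    have hsub : ∀ w, w ∈ gHull ({x, y, z} : Set X) → w ∈ seg c1 c2 := by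
      intro w hw
      have hwle : dist w c1 + dist w c2 ≤ M := hsublevel hw
      have htri := dist_triangle c1 w c2
      show dist c1 w + dist w c2 = dist c1 c2
      have hcc := dist_comm w c1
      rw [hDM] at htri ⊢
      linarith
    have hxh : x ∈ gHull ({x, y, z} : Set X) := subset_gHull _ (by simp)
    have hyh : y ∈ gHull ({x, y, z} : Set X) := subset_gHull _ (by simp)
    have hzh : z ∈ gHull ({x, y, z} : Set X) := subset_gHull _ (by simp)
    exact collinear_of_mem_seg hB (hsub x hxh) (hsub y hyh) (hsub z hzh)
  · left
    set G := {w : X | dist w c1 + dist w c2 < M} ∪ ({x, y, z} : Set X) with hGdef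
    have hGle : ∀ q ∈ G, dist q c1 + dist q c2 ≤ M := by
      intro q hq
      rcases hq with hq | hq
      · exact le_of_lt hq
      · simp only [Set.mem_insert_iff, Set.mem_singleton_iff] at hq
        exact hMmax q hq
    have hGconv : GConvex G := by
      intro u hu v hv w hw
      obtain ⟨γ, hγ, h0, h1⟩ := hB.1 u v
      have hwseg : dist u w + dist w v = dist u v := hw
      have hwp : γ (dist u w) = w := geo_param hB hw hγ h0 h1
      by_cases hl : dist u v = 0
      · have h2 : dist u w = 0 := by
          linarith [dist_nonneg (x := w) (y := v), dist_nonneg (x := u) (y := w)]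
        have hwu : w = u := (dist_eq_zero.mp h2).symm
        rw [hwu]; exact hu
      have hlpos : 0 < dist u v := lt_of_le_of_ne dist_nonneg (Ne.symm hl)
      by_cases htz : dist u w = 0
      · have hwu : w = u := (dist_eq_zero.mp htz).symm
        rw [hwu]; exact hu
      by_cases htl : dist u w = dist u v
      · have hwv : dist w v = 0 := by linarith
        have : w = v := dist_eq_zero.mp hwv
        rw [this]; exact hv
      have ht0 : 0 < dist u w := lt_of_le_of_ne dist_nonneg (Ne.symm htz)
      have htltl : dist u w < dist u v :=
        lt_of_le_of_ne (by linarith [dist_nonneg (x := w) (y := v)]) htl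
      set l := dist u v with hldef
      set t := dist u w with htdef
      have htt : t / l ∈ Set.Icc (0:ℝ) 1 := ⟨div_nonneg ht0.le hlpos.le, (div_le_one hlpos).mpr htltl.le⟩
      have hcx1 := bus_convex hB hγ c1 (⟨le_rfl, hlpos.le⟩ : (0:ℝ) ∈ Set.Icc 0 l)
        (⟨hlpos.le, le_rfl⟩ : l ∈ Set.Icc 0 l) hlpos.le htt
      have hcx2 := bus_convex hB hγ c2 (⟨le_rfl, hlpos.le⟩ : (0:ℝ) ∈ Set.Icc 0 l)
        (⟨hlpos.le, le_rfl⟩ : l ∈ Set.Icc 0 l) hlpos.le htt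
      rw [show (1 - t/l) * 0 + t/l * l = t by (field_simp; ring), hwp, h0, h1] at hcx1 hcx2
      have hfuM := hGle u hu
      have hfvM := hGle v hv
      have hcoef1 : (0:ℝ) ≤ 1 - t/l := by linarith [htt.2]
      by_cases hflt : dist w c1 + dist w c2 < M
      · exact Or.inl hflt
      · exfalso
        push_neg at hflt
        have hfw : dist w c1 + dist w c2 = M := by
          refine le_antisymm ?_ hflt
          have k1 := mul_le_mul_of_nonneg_left hfuM hcoef1
          have k2 := mul_le_mul_of_nonneg_left hfvM htt.1
          nlinarith [hcx1, hcx2, k1, k2]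
        have hcoef1' : (0:ℝ) < 1 - t/l := by
          have : t/l < 1 := (div_lt_one hlpos).mpr htltl
          linarith
        have hcoef2' : (0:ℝ) < t/l := div_pos ht0 hlpos
        have hfu : dist u c1 + dist u c2 = M := by
          by_contra hne
          have hfu' : dist u c1 + dist u c2 < M := lt_of_le_of_ne hfuM hne
          have k1 := mul_lt_mul_of_pos_left hfu' hcoef1'
          have k2 := mul_le_mul_of_nonneg_left hfvM htt.1
          nlinarith [hcx1, hcx2, k1, k2]
        have hfv : dist v c1 + dist v c2 = M := by
          by_contra hne
          have hfv' : dist v c1 + dist v c2 < M := lt_of_le_of_ne hfvM hne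
          have k1 := mul_le_mul_of_nonneg_left hfuM hcoef1
          have k2 := mul_lt_mul_of_pos_left hfv' hcoef2'
          nlinarith [hcx1, hcx2, k1, k2]
        apply hBad
        refine ⟨γ, l, hlpos, hγ, ?_⟩
        intro s hs
        have hsl1 : s / l ∈ Set.Icc (0:ℝ) 1 := ⟨div_nonneg hs.1 hlpos.le, (div_le_one hlpos).mpr hs.2⟩
        have hup : dist (γ s) c1 + dist (γ s) c2 ≤ M := by
          have hg1 := bus_convex hB hγ c1 (⟨le_rfl, hlpos.le⟩ : (0:ℝ) ∈ Set.Icc 0 l)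
            (⟨hlpos.le, le_rfl⟩ : l ∈ Set.Icc 0 l) hlpos.le hsl1
          have hg2 := bus_convex hB hγ c2 (⟨le_rfl, hlpos.le⟩ : (0:ℝ) ∈ Set.Icc 0 l)
            (⟨hlpos.le, le_rfl⟩ : l ∈ Set.Icc 0 l) hlpos.le hsl1
          rw [show (1 - s/l) * 0 + s/l * l = s by (field_simp; ring), h0, h1] at hg1 hg2
          have k1 := mul_le_mul_of_nonneg_left hfuM (by linarith [hsl1.2] : (0:ℝ) ≤ 1 - s/l)
          have k2 := mul_le_mul_of_nonneg_left hfvM hsl1.1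
          nlinarith [hg1, hg2, k1, k2]
        have hge : M ≤ dist (γ s) c1 + dist (γ s) c2 := by
          rcases le_total s t with hst | hst
          · have hsl : s < l := lt_of_le_of_lt hst htltl
            set lam := (t - s) / (l - s) with hlamdef
            clear_value lam
            have hl0 : 0 ≤ lam := by rw [hlamdef]; exact div_nonneg (by linarith) (by linarith)
            have hllt : lam < 1 := by rw [hlamdef, div_lt_one (by linarith)]; linarith
            have hLs : l - s ≠ 0 := sub_ne_zero.mpr (Ne.symm (ne_of_lt hsl))
            have hcombo : (1 - lam) * s + lam * l = t := by
              rw [hlamdef]; field_simp; ring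
            have hg1 := bus_convex hB hγ c1 (⟨hs.1, hsl.le⟩ : s ∈ Set.Icc 0 l)
              (⟨hlpos.le, le_rfl⟩ : l ∈ Set.Icc 0 l) hsl.le ⟨hl0, hllt.le⟩
            have hg2 := bus_convex hB hγ c2 (⟨hs.1, hsl.le⟩ : s ∈ Set.Icc 0 l)
              (⟨hlpos.le, le_rfl⟩ : l ∈ Set.Icc 0 l) hsl.le ⟨hl0, hllt.le⟩
            rw [hcombo, hwp, h1] at hg1 hg2
            have h7 : (1 - lam) * M ≤ (1 - lam) * (dist (γ s) c1 + dist (γ s) c2) := by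
              nlinarith [hg1, hg2, hfw, hfv]
            exact le_of_mul_le_mul_left h7 (by linarith)
          · have hspos : 0 < s := lt_of_lt_of_le ht0 hst
            set lam := t / s with hlamdef
            clear_value lam
            have hl0 : 0 ≤ lam := by rw [hlamdef]; exact div_nonneg ht0.le hspos.le
            have hlle : lam ≤ 1 := by rw [hlamdef]; exact (div_le_one hspos).mpr hst
            have hlpos' : 0 < lam := by rw [hlamdef]; exact div_pos ht0 hspos
            have hcombo : (1 - lam) * 0 + lam * s = t := by
              rw [hlamdef]; field_simp; ring
            have hg1 := bus_convex hB hγ c1 (⟨le_rfl, hlpos.le⟩ : (0:ℝ) ∈ Set.Icc 0 l)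
              hs hs.1 ⟨hl0, hlle⟩
            have hg2 := bus_convex hB hγ c2 (⟨le_rfl, hlpos.le⟩ : (0:ℝ) ∈ Set.Icc 0 l)
              hs hs.1 ⟨hl0, hlle⟩
            rw [hcombo, hwp, h0] at hg1 hg2
            have h7 : lam * M ≤ lam * (dist (γ s) c1 + dist (γ s) c2) := by
              nlinarith [hg1, hg2, hfw, hfu]
            exact le_of_mul_le_mul_left h7 hlpos'
        linarith
    have hsubG : gHull ({x, y, z} : Set X) ⊆ G := by
      refine gHull_min hGconv ?_
      intro q hq
      exact Or.inr hq
    rcases hsubG hp with h | h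
    · exact absurd hpM (ne_of_lt h)
    · simpa using h

end Aux4

set_option maxHeartbeats 4000000 in
/-- monotonicity of perimeters of triangles, with the equality case. -/
theorem perim_mono_of_mem_triangle {X : Type*} [MetricSpace X]
    (hX : IsBusemannSurface X) (x y z x' y' z' : X)
    (hx' : x' ∈ triangleG x y z) (hy' : y' ∈ triangleG x y z)
    (hz' : z' ∈ triangleG x y z) :
    perim x' y' z' ≤ perim x y z ∧
      (perim x' y' z' = perim x y z →
        ({x', y', z'} : Set X) = ({x, y, z} : Set X) ∨ CollinearPts x y z) := by
  have hB : IsBusemannSpace X := hX.1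
  rw [show triangleG x y z = gHull {x, y, z} from rfl] at hx' hy' hz'
  have hx'' : x' ∈ gHull {x, y, z} := hx'
  have hy'' : y' ∈ gHull {x, y, z} := hy'
  have hz'' : z' ∈ gHull {x, y, z} := hz'
  obtain ⟨a, haor, hA1, hamax⟩ := argmax3_dist hB x y z y' z' hx''
  obtain ⟨b, hbor, hA2, hbmax⟩ := argmax3_dist hB x y z a z' hy''
  obtain ⟨c, hcor, hA3, hcmax⟩ := argmax3_dist hB x y z a b hz''
  have hA4 : dist a b + dist b c + dist c a ≤ dist x y + dist y z + dist z x := by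
    rcases haor with ha1 | ha1 | ha1 <;> rcases hbor with hb1 | hb1 | hb1 <;>
      rcases hcor with hc1 | hc1 | hc1 <;> rw [ha1, hb1, hc1] <;>
      linarith [dist_triangle x y z, dist_triangle y z x, dist_triangle z x y,
        dist_triangle x z y, dist_triangle z y x, dist_triangle y x z,
        dist_comm x y, dist_comm y z, dist_comm x z,
        dist_self x, dist_self y, dist_self z,
        dist_nonneg (x := x) (y := y), dist_nonneg (x := y) (y := z),
        dist_nonneg (x := z) (y := x)]
  have h01 : dist x' y' + dist y' z' + dist z' x'
      ≤ dist a y' + dist y' z' + dist z' a := by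
    linarith [hA1, dist_comm z' x', dist_comm z' a]
  have h12 : dist a y' + dist y' z' + dist z' a
      ≤ dist a b + dist b z' + dist z' a := by
    linarith [hA2, dist_comm a y', dist_comm a b]
  have h23 : dist a b + dist b z' + dist z' a
      ≤ dist a b + dist b c + dist c a := by
    linarith [hA3, dist_comm z' b, dist_comm c b]
  constructor
  · show dist x' y' + dist y' z' + dist z' x' ≤ dist x y + dist y z + dist z x
    linarith
  intro hEq
  by_cases hcol : CollinearPts x y z
  · exact Or.inr hcol
  left
  have hT1 : dist x z < dist x y + dist y z :=
    lt_of_le_of_ne (dist_triangle x y z) (fun h => hcol (Or.inl h.symm))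
  have hT2 : dist y z < dist y x + dist x z :=
    lt_of_le_of_ne (dist_triangle y x z) (fun h => hcol (Or.inr (Or.inl h.symm)))
  have hT3 : dist x y < dist x z + dist z y :=
    lt_of_le_of_ne (dist_triangle x z y) (fun h => hcol (Or.inr (Or.inr h.symm)))
  have hP : dist x' y' + dist y' z' + dist z' x' = dist x y + dist y z + dist z x := hEq
  have q1 : dist x' y' + dist x' z' = dist a y' + dist a z' := by
    linarith [hP, h01, h12, h23, hA4, dist_comm z' x', dist_comm z' a]
  have q2 : dist y' a + dist y' z' = dist b a + dist b z' := by
    linarith [hP, h01, h12, h23, hA4, dist_comm a y', dist_comm a b]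
  have q3 : dist z' a + dist z' b = dist c a + dist c b := by
    linarith [hP, h01, h12, h23, hA4, dist_comm z' b, dist_comm c b]
  have hx'm : x' = x ∨ x' = y ∨ x' = z := by
    rcases lemE hB x y z y' z' hx'' hamax q1 with h | h
    · exact h
    · exact absurd h hcol
  have hy'm : y' = x ∨ y' = y ∨ y' = z := by
    rcases lemE hB x y z a z' hy'' hbmax q2 with h | h
    · exact h
    · exact absurd h hcol
  have hz'm : z' = x ∨ z' = y ∨ z' = z := by
    rcases lemE hB x y z a b hz'' hcmax q3 with h | h
    · exact h
    · exact absurd h hcol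
  clear q1 q2 q3 h01 h12 h23 hA1 hA2 hA3 hA4 hamax hbmax hcmax haor hbor hcor hEq
  clear hx' hy' hz' hx'' hy'' hz'' hB hX hcol
  rcases hx'm with h1 | h1 | h1 <;> rcases hy'm with h2 | h2 | h2 <;>
    rcases hz'm with h3 | h3 | h3 <;> rw [h1, h2, h3] at hP ⊢ <;>
    first
      | (ext w; simp only [Set.mem_insert_iff, Set.mem_singleton_iff]; tauto)
      | (exfalso;
         linarith [hP, hT1, hT2, hT3, dist_comm x y, dist_comm y z, dist_comm x z,
           dist_self x, dist_self y, dist_self z,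
           dist_nonneg (x := x) (y := y), dist_nonneg (x := y) (y := z),
           dist_nonneg (x := z) (y := x)])
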